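/- In a deterministic MDP, the value of every zero-reward state is determined by a positive-reward state: suppose V : S → ℝ satisfies the deterministic Bellman optimality equation V(s) = R(s) + γ · max_{a∈A} V(T(s,a)) for all s, that R(s) ≥ 0 for all s, and that s ∈ S satisfies R(s) = 0 and V(s) > 0. Then there exist n ≥ 1, actions a₀,…,a_{n−1} ∈ A and the trajectory s⁽⁰⁾ = s, s⁽ᵏ⁺¹⁾ = T(s⁽ᵏ⁾, a_k), such that R(s⁽ᵏ⁾) = 0 for all 0 ≤ k < n, R(s⁽ⁿ⁾) > 0, and V(s) = γⁿ · V(s⁽ⁿ⁾). -/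

import Mathlib

/-- The trajectory induced by an infinite action sequence `a` from initial
state `s`: `traj T s a 0 = s` and `traj T s a (t+1) = T (traj T s a t) (a t)`. -/
def traj {S A : Type*} (T : S → A → S) (s : S) (a : ℕ → A) : ℕ → S
  | 0 => s
  | t + 1 => T (traj T s a t) (a t)

/-- In a deterministic MDP, the value of every zero-reward state is
determined by a positive-reward state: if `V` satisfies the deterministic
Bellman optimality equation `V s = R s + γ * max_a V (T s a)`, rewards are
nonnegative, and `s` has `R s = 0` and `V s > 0`, then there is `n ≥ 1` and a
sequence of actions whose trajectory from `s` has zero reward at every step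
before `n`, positive reward at step `n`, and `V s = γ ^ n * V (s⁽ⁿ⁾)`. -/
theorem zero_reward_value_determined_by_positive_reward_state
    {S A : Type*} [Fintype S] [Nonempty S] [Fintype A] [Nonempty A]
    (T : S → A → S) (R : S → ℝ) (γ : ℝ) (hγ0 : 0 < γ) (hγ1 : γ < 1)
    (V : S → ℝ)
    (hV : ∀ s : S,
      V s = R s + γ * Finset.univ.sup' Finset.univ_nonempty (fun a : A => V (T s a)))
    (hR : ∀ s : S, 0 ≤ R s)
    (s : S) (hRs : R s = 0) (hVs : 0 < V s) :
    ∃ n : ℕ, 1 ≤ n ∧ ∃ a : ℕ → A,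
      (∀ k : ℕ, k < n → R (traj T s a k) = 0) ∧
      0 < R (traj T s a n) ∧
      V s = γ ^ n * V (traj T s a n) := by
  classical
  -- choose a greedy action at every state
  have hg : ∀ t : S, ∃ a : A,
      Finset.univ.sup' Finset.univ_nonempty (fun a : A => V (T t a)) = V (T t a) := by
    intro t
    obtain ⟨a, -, ha⟩ :=
      Finset.exists_mem_eq_sup' (Finset.univ_nonempty (α := A)) (fun a : A => V (T t a))
    exact ⟨a, ha⟩
  choose g hgspec using hg
  -- greedy path
  set p : ℕ → S := fun k => Nat.rec s (fun _ prev => T prev (g prev)) k with hp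
  have hpsucc : ∀ k, p (k + 1) = T (p k) (g (p k)) := fun k => rfl
  set a : ℕ → A := fun k => g (p k) with ha
  have htraj : ∀ k, traj T s a k = p k := by
    intro k
    induction k with
    | zero => rfl
    | succ k ih => exact (congrArg (fun x => T x (a k)) ih).trans (hpsucc k).symm
  -- one-step Bellman along the greedy path
  have hstep : ∀ k, V (p k) = R (p k) + γ * V (p (k + 1)) := by
    intro k
    rw [hpsucc, ← hgspec (p k)]
    exact hV (p k)
  have hchain : ∀ n, (∀ j, j < n → R (p j) = 0) → V s = γ ^ n * V (p n) := by
    intro n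
    induction n with
    | zero => intro _; simp [hp]
    | succ n ih =>
      intro h
      have h0 : V s = γ ^ n * V (p n) := ih fun j hj => h j (hj.trans n.lt_succ_self)
      rw [h0, hstep n, h n n.lt_succ_self, pow_succ]
      ring
  -- bound on V
  set M : ℝ := Finset.univ.sup' Finset.univ_nonempty V with hM
  have hMle : ∀ t : S, V t ≤ M := fun t => Finset.le_sup' V (Finset.mem_univ t)
  have hMpos : 0 < M := hVs.trans_le (hMle s)
  -- there is a step with nonzero reward
  have hex : ∃ k, R (p k) ≠ 0 := by
    by_contra h
    push_neg at h
    obtain ⟨n, hn⟩ := exists_pow_lt_of_lt_one (div_pos hVs hMpos) hγ1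
    have h1 : V s = γ ^ n * V (p n) := hchain n fun j _ => h j
    have h2 : γ ^ n * V (p n) ≤ γ ^ n * M :=
      mul_le_mul_of_nonneg_left (hMle _) (pow_nonneg hγ0.le n)
    have h3 : γ ^ n * M < V s := (lt_div_iff₀ hMpos).mp hn
    linarith
  refine ⟨Nat.find hex, ?_, a, ?_, ?_, ?_⟩
  · rcases Nat.eq_zero_or_pos (Nat.find hex) with h0 | h0
    · exact absurd (Nat.find_spec hex) (by simp [h0, hp, hRs])
    · exact h0
  · intro k hk
    have := Nat.find_min hex hk
    simpa [htraj] using not_not.mp this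
  · rw [htraj]
    exact lt_of_le_of_ne (hR _) (Ne.symm (Nat.find_spec hex))
  · rw [htraj]
    exact hchain _ fun j hj => not_not.mp (Nat.find_min hex hj)
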